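/- Let d, g, y be rational numbers and suppose y₋ ∈ ℚ is the greatest element of the set { −(⌊d·k⌋ + ⌈g·k⌉)/k : k a positive integer }. (i) If neither y nor d is an integer, and ŷ₋ ∈ ℚ is the greatest element of the set { −(1 + ⌊y·k⌋ + ⌊d·k⌋)/k : k a positive integer }, then y ≥ y₋ if and only if g > ŷ₋. (ii) If y is an integer or d is an integer, then y ≥ y₋ if and only if g ≥ −y − d. -/

import Mathlib

private lemma step1 (d g y : ℚ) (k : ℕ) (hk : 0 < k) :
    -((⌊d * (k:ℚ)⌋ : ℚ) + (⌈g * (k:ℚ)⌉ : ℚ))/(k:ℚ) ≤ y ↔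
      -⌊y * (k:ℚ)⌋ - ⌊d * (k:ℚ)⌋ ≤ ⌈g * (k:ℚ)⌉ := by
  have hk' : (0:ℚ) < k := by exact_mod_cast hk
  have e : ⌈-(y * (k:ℚ)) - (⌊d * (k:ℚ)⌋ : ℚ)⌉ = -⌊y * (k:ℚ)⌋ - ⌊d * (k:ℚ)⌋ := by
    rw [Int.ceil_sub_intCast, Int.ceil_neg]
  constructor
  · intro h1
    rw [div_le_iff₀ hk'] at h1
    have h2 : -(y * (k:ℚ)) - (⌊d * (k:ℚ)⌋ : ℚ) ≤ (⌈g * (k:ℚ)⌉ : ℚ) := by linarith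
    have := Int.ceil_le.mpr h2
    rwa [e] at this
  · intro h1
    rw [div_le_iff₀ hk']
    rw [← e] at h1
    have h2 : -(y * (k:ℚ)) - (⌊d * (k:ℚ)⌋ : ℚ) ≤ (⌈g * (k:ℚ)⌉ : ℚ) := Int.ceil_le.mp h1
    linarith

private lemma step2 (d g y : ℚ) (k : ℕ) (hk : 0 < k) :
    -(1 + (⌊y * (k:ℚ)⌋ : ℚ) + (⌊d * (k:ℚ)⌋ : ℚ))/(k:ℚ) < g ↔
      -⌊y * (k:ℚ)⌋ - ⌊d * (k:ℚ)⌋ ≤ ⌈g * (k:ℚ)⌉ := by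
  have hk' : (0:ℚ) < k := by exact_mod_cast hk
  rw [div_lt_iff₀ hk']
  constructor
  · intro h1
    have h2 : ((-1 - ⌊y * (k:ℚ)⌋ - ⌊d * (k:ℚ)⌋ : ℤ) : ℚ) < g * (k:ℚ) := by
      push_cast; linarith
    have := Int.lt_ceil.mpr h2
    omega
  · intro h1
    have h2 : ((-1 - ⌊y * (k:ℚ)⌋ - ⌊d * (k:ℚ)⌋ : ℤ) : ℚ) < g * (k:ℚ) :=
      Int.lt_ceil.mp (by omega)
    push_cast at h2; linarith

theorem stmt_4 (d g y yneg : ℚ)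
    (h : IsGreatest {x : ℚ | ∃ k : ℕ, 0 < k ∧
      x = -((⌊d * (k:ℚ)⌋ : ℚ) + (⌈g * (k:ℚ)⌉ : ℚ))/(k:ℚ)} yneg) :
    ((¬∃ z : ℤ, (z:ℚ) = y) → (¬∃ z : ℤ, (z:ℚ) = d) →
      ∀ yhatneg : ℚ, IsGreatest {x : ℚ | ∃ k : ℕ, 0 < k ∧
        x = -(1 + (⌊y * (k:ℚ)⌋ : ℚ) + (⌊d * (k:ℚ)⌋ : ℚ))/(k:ℚ)} yhatneg →
      (y ≥ yneg ↔ g > yhatneg)) ∧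
    (((∃ z : ℤ, (z:ℚ) = y) ∨ (∃ z : ℤ, (z:ℚ) = d)) →
      (y ≥ yneg ↔ g ≥ -y - d)) := by
  have hA : yneg ≤ y ↔ ∀ k : ℕ, 0 < k →
      -⌊y * (k:ℚ)⌋ - ⌊d * (k:ℚ)⌋ ≤ ⌈g * (k:ℚ)⌉ := by
    constructor
    · intro hy k hk
      exact (step1 d g y k hk).mp (le_trans (h.2 ⟨k, hk, rfl⟩) hy)
    · intro hall
      obtain ⟨k, hk, hx⟩ := h.1
      rw [hx]
      exact (step1 d g y k hk).mpr (hall k hk)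
  constructor
  · intro _ _ yhatneg hh
    have hB : yhatneg < g ↔ ∀ k : ℕ, 0 < k →
        -⌊y * (k:ℚ)⌋ - ⌊d * (k:ℚ)⌋ ≤ ⌈g * (k:ℚ)⌉ := by
      constructor
      · intro hg k hk
        exact (step2 d g y k hk).mp (lt_of_le_of_lt (hh.2 ⟨k, hk, rfl⟩) hg)
      · intro hall
        obtain ⟨k, hk, hx⟩ := hh.1
        rw [hx]
        exact (step2 d g y k hk).mpr (hall k hk)
    rw [ge_iff_le, hA, gt_iff_lt, hB]
  · intro hz
    rw [ge_iff_le, hA, ge_iff_le]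
    constructor
    · -- forward: needs no integrality of y, d beyond denominators
      intro hall
      by_contra hlt
      push_neg at hlt
      set ε : ℚ := -y - d - g with hε
      have hεpos : 0 < ε := by rw [hε]; linarith
      obtain ⟨n, hn⟩ := exists_nat_gt (1/ε)
      have hn0 : 0 < n := by
        have h0 : (0:ℚ) < (n:ℚ) := lt_trans (by positivity) hn
        exact_mod_cast h0
      set k : ℕ := n * y.den * d.den with hkdef
      have hkpos : 0 < k := by positivity
      have hkQ : (0:ℚ) < (k:ℚ) := by exact_mod_cast hkpos
      have hyk : y * (k:ℚ) = ((y.num * n * d.den : ℤ) : ℚ) := by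
        push_cast [hkdef]
        rw [show y * ((n:ℚ) * y.den * d.den) = (y * y.den) * n * d.den by ring,
          Rat.mul_den_eq_num]
      have hdk : d * (k:ℚ) = ((d.num * n * y.den : ℤ) : ℚ) := by
        push_cast [hkdef]
        rw [show d * ((n:ℚ) * y.den * d.den) = (d * d.den) * n * y.den by ring,
          Rat.mul_den_eq_num]
      have hfy : (⌊y * (k:ℚ)⌋ : ℚ) = y * (k:ℚ) := by rw [hyk, Int.floor_intCast]
      have hfd : (⌊d * (k:ℚ)⌋ : ℚ) = d * (k:ℚ) := by rw [hdk, Int.floor_intCast]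
      have hck := hall k hkpos
      have hckQ : -(⌊y * (k:ℚ)⌋:ℚ) - (⌊d * (k:ℚ)⌋:ℚ) ≤ (⌈g * (k:ℚ)⌉:ℚ) := by
        exact_mod_cast hck
      have hceil : (⌈g * (k:ℚ)⌉ : ℚ) < g * (k:ℚ) + 1 := Int.ceil_lt_add_one _
      have key : -(y * (k:ℚ)) - d * (k:ℚ) < g * (k:ℚ) + 1 := by
        rw [← hfy, ← hfd]; linarith
      -- so ε * k < 1
      have hεk : ε * (k:ℚ) < 1 := by
        have he : ε * (k:ℚ) = -(y*(k:ℚ)) - d*(k:ℚ) - g*(k:ℚ) := by rw [hε]; ring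
        rw [he]; linarith
      have hnk : (n:ℚ) ≤ (k:ℚ) := by
        exact_mod_cast Nat.le_mul_of_pos_right n (by positivity : 0 < y.den * d.den) |>.trans (le_of_eq (by rw [hkdef]; ring))
      have h1 : 1/ε < (k:ℚ) := lt_of_lt_of_le hn hnk
      have : (1:ℚ) < ε * (k:ℚ) := by
        rw [div_lt_iff₀ hεpos] at h1
        linarith
      linarith
    · intro hge k hk
      have hkQ : (0:ℚ) < (k:ℚ) := by exact_mod_cast hk
      have hgk : (-y - d) * (k:ℚ) ≤ g * (k:ℚ) := by
        exact mul_le_mul_of_nonneg_right hge hkQ.le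
      have hc : g * (k:ℚ) ≤ (⌈g * (k:ℚ)⌉ : ℚ) := Int.le_ceil _
      rcases hz with ⟨z, hzy⟩ | ⟨z, hzd⟩
      · have hfy : (⌊y * (k:ℚ)⌋ : ℚ) = y * (k:ℚ) := by
          rw [← hzy, show (z:ℚ) * (k:ℚ) = ((z * k : ℤ):ℚ) by push_cast; ring,
            Int.floor_intCast]
        have hfd : d * (k:ℚ) < (⌊d * (k:ℚ)⌋ : ℚ) + 1 := Int.lt_floor_add_one _
        have : (-(⌊y * (k:ℚ)⌋:ℚ) - (⌊d * (k:ℚ)⌋:ℚ)) - 1 < (⌈g * (k:ℚ)⌉ : ℚ) := by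
          rw [hfy]; nlinarith
        have h2 : ((- ⌊y * (k:ℚ)⌋ - ⌊d * (k:ℚ)⌋ - 1 : ℤ):ℚ) < ((⌈g * (k:ℚ)⌉:ℤ):ℚ) := by
          push_cast; linarith
        have h3 : (- ⌊y * (k:ℚ)⌋ - ⌊d * (k:ℚ)⌋ - 1 : ℤ) < ⌈g * (k:ℚ)⌉ := by
          exact_mod_cast h2
        omega
      · have hfd : (⌊d * (k:ℚ)⌋ : ℚ) = d * (k:ℚ) := by
          rw [← hzd, show (z:ℚ) * (k:ℚ) = ((z * k : ℤ):ℚ) by push_cast; ring,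
            Int.floor_intCast]
        have hfy : y * (k:ℚ) < (⌊y * (k:ℚ)⌋ : ℚ) + 1 := Int.lt_floor_add_one _
        have h2 : ((- ⌊y * (k:ℚ)⌋ - ⌊d * (k:ℚ)⌋ - 1 : ℤ):ℚ) < ((⌈g * (k:ℚ)⌉:ℤ):ℚ) := by
          push_cast; rw [hfd]; nlinarith
        have h3 : (- ⌊y * (k:ℚ)⌋ - ⌊d * (k:ℚ)⌋ - 1 : ℤ) < ⌈g * (k:ℚ)⌉ := by
          exact_mod_cast h2
        omega
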